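/- arXiv:2003.02419 — 2 statements merged into one kernel-verified Lean document; each statement's English description precedes it below -/
import Mathlib

section
/- Let ω ∈ ℤ[X] be a polynomial of degree k ≥ 2. For every ε > 0 there exists a constant C (depending on ω and ε) such that for all positive integers N, all reals x, y, and all reals δ₁, δ₂, one has |W_ω(x + δ₁, y + δ₂; N) − W_ω(x, y; N)| ≤ C·(N^{2+ε}·|δ₁| + N^{k+1+ε}·|δ₂|). -/
open MeasureTheory Finset Polynomial

/-- `e(t) = exp(2πit)`. -/
noncomputable def e (t : ℝ) : ℂ := Complex.exp (2 * Real.pi * Complex.I * t)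

/-- The Weyl sum `S_ω(x, y; N) = ∑_{n=1}^{N} e(x·n + y·ω(n))`. -/
noncomputable def WeylS (ω : Polynomial ℤ) (x y : ℝ) (N : ℕ) : ℂ :=
  ∑ n ∈ Finset.Icc 1 N, e (x * (n : ℝ) + y * ((ω.eval (n : ℤ) : ℤ) : ℝ))

/-- `η(k)` from the paper. -/
def etaP (k : ℕ) : ℕ :=
  if 2 * k + 2 ≥ (Nat.sqrt (2 * k + 2)) ^ 2 + Nat.sqrt (2 * k + 2) then 0 else 1

/-- `s₀(k)` from the paper. -/
def s0 (k : ℕ) : ℕ :=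
  if k = 2 then 3 else if k = 3 then 5 else if k = 4 then 8 else if k = 5 then 12
  else if k = 6 then 18 else if k = 7 then 24 else if k = 8 then 31 else if k = 9 then 40
  else if k = 10 then 49 else k * (k - 1) / 2 + Nat.sqrt (2 * k + 2) - etaP k

/-- The completed sum
`W_ω(x, y; N) = ∑_{h=−N}^{N} (1/(|h|+1))·|∑_{n=1}^{N} e(h·n/N + x·n + y·ω(n))|`. -/
noncomputable def WeylW (ω : Polynomial ℤ) (x y : ℝ) (N : ℕ) : ℝ :=
  ∑ h ∈ Finset.Icc (-(N : ℤ)) (N : ℤ), (1 / (|(h : ℝ)| + 1)) *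
    ‖(∑ n ∈ Finset.Icc 1 N,
      e ((h : ℝ) * (n : ℝ) / (N : ℝ) + x * (n : ℝ) + y * ((ω.eval (n : ℤ) : ℤ) : ℝ)))‖



lemma aux_abs_exp_I_sub_one (t : ℝ) :
    ‖Complex.exp (t * Complex.I) - 1‖ ≤ |t| := by
  have h1 : Complex.exp (t * Complex.I) - 1
      = ((Real.cos t - 1 : ℝ) : ℂ) + (Real.sin t : ℝ) * Complex.I := by
    rw [Complex.exp_mul_I, ← Complex.ofReal_cos, ← Complex.ofReal_sin]
    push_cast
    ring
  rw [h1, Complex.norm_add_mul_I]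
  have h2 : (Real.cos t - 1) ^ 2 + Real.sin t ^ 2 = (2 * Real.sin (t / 2)) ^ 2 := by
    have h3 : Real.sin (t / 2) ^ 2 = 1 / 2 - Real.cos (2 * (t / 2)) / 2 :=
      Real.sin_sq_eq_half_sub (t / 2)
    have h4 : Real.sin t ^ 2 + Real.cos t ^ 2 = 1 := Real.sin_sq_add_cos_sq t
    rw [show 2 * (t / 2) = t by ring] at h3
    nlinarith
  rw [h2, Real.sqrt_sq_eq_abs, abs_mul, abs_two]
  have h5 : |Real.sin (t / 2)| ≤ |t / 2| := Real.abs_sin_le_abs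
  rw [abs_div, abs_two] at h5
  linarith

lemma aux_abs_e_sub_e (a b : ℝ) :
    ‖e a - e b‖ ≤ 2 * Real.pi * |a - b| := by
  have h : e a = e b * e (a - b) := by
    rw [e, e, e, ← Complex.exp_add]
    congr 1
    push_cast
    ring
  have h2 : e (a - b) = Complex.exp ((2 * Real.pi * (a - b) : ℝ) * Complex.I) := by
    rw [e]; congr 1; push_cast; ring
  calc ‖e a - e b‖ = ‖e b‖ * ‖e (a - b) - 1‖ := by
        rw [h, ← norm_mul]; congr 1; ring
    _ ≤ 1 * |2 * Real.pi * (a - b)| := by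
        apply mul_le_mul _ _ (norm_nonneg _) zero_le_one
        · rw [e, Complex.norm_exp]
          simp
        · rw [h2]; exact aux_abs_exp_I_sub_one _
    _ ≤ 2 * Real.pi * |a - b| := by
        rw [one_mul, abs_mul]
        have : |2 * Real.pi| = 2 * Real.pi := abs_of_pos (by positivity)
        rw [this]


lemma aux_sum_inv_abs_le (N : ℕ) :
    ∑ h ∈ Finset.Icc (-(N : ℤ)) (N : ℤ), 1 / (|(h : ℝ)| + 1)
      ≤ 1 + 2 * (harmonic (N + 1) : ℝ) := by
  induction N with
  | zero =>
      simp [harmonic_succ]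
  | succ n ih =>
      have hs : Finset.Icc (-((n : ℤ) + 1)) ((n : ℤ) + 1)
          = insert (-((n : ℤ) + 1)) (insert ((n : ℤ) + 1) (Finset.Icc (-(n : ℤ)) (n : ℤ))) := by
        ext h
        simp only [Finset.mem_Icc, Finset.mem_insert]
        omega
      have h1 : (-((n : ℤ) + 1)) ∉ insert ((n : ℤ) + 1) (Finset.Icc (-(n : ℤ)) (n : ℤ)) := by
        simp only [Finset.mem_Icc, Finset.mem_insert]
        omega
      have h2 : ((n : ℤ) + 1) ∉ Finset.Icc (-(n : ℤ)) (n : ℤ) := by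
        simp only [Finset.mem_Icc]
        omega
      have hh : (harmonic (n + 1 + 1) : ℝ) = (harmonic (n + 1) : ℝ) + 1 / ((n : ℝ) + 2) := by
        rw [harmonic_succ]
        push_cast
        ring
      push_cast
      rw [hs, Finset.sum_insert h1, Finset.sum_insert h2]
      push_cast
      rw [show |(-((n : ℝ) + 1))| = (n : ℝ) + 1 by
          rw [abs_neg]; exact abs_of_nonneg (by positivity),
        show |((n : ℝ) + 1)| = (n : ℝ) + 1 from abs_of_nonneg (by positivity), hh,
        show (n : ℝ) + 1 + 1 = (n : ℝ) + 2 from by ring]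
      linarith

lemma aux_eval_bound (ω : Polynomial ℤ) (N n : ℕ) (h1 : 1 ≤ n) (h2 : n ≤ N) :
    |((ω.eval (n : ℤ) : ℤ) : ℝ)|
      ≤ (∑ i ∈ Finset.range (ω.natDegree + 1), |((ω.coeff i : ℤ) : ℝ)|) * (N : ℝ) ^ ω.natDegree := by
  have hN : (1 : ℝ) ≤ (N : ℝ) := by exact_mod_cast h1.trans h2
  rw [Polynomial.eval_eq_sum_range]
  push_cast
  refine (Finset.abs_sum_le_sum_abs _ _).trans ?_
  rw [Finset.sum_mul]
  apply Finset.sum_le_sum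
  intro i hi
  rw [abs_mul, abs_pow, Nat.abs_cast]
  refine mul_le_mul_of_nonneg_left ?_ (abs_nonneg _)
  have hn' : (n : ℝ) ≤ (N : ℝ) := by exact_mod_cast h2
  calc ((n : ℝ)) ^ i ≤ (N : ℝ) ^ i := by gcongr
    _ ≤ (N : ℝ) ^ ω.natDegree :=
        pow_le_pow_right₀ hN (Finset.mem_range_succ_iff.mp hi)

theorem continuity_of_completed_sums
    (k : ℕ) (hk : 2 ≤ k) (ω : Polynomial ℤ) (hω : ω.natDegree = k)
    (ε : ℝ) (hε : 0 < ε) :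
    ∃ C : ℝ, ∀ N : ℕ, 0 < N → ∀ x y δ₁ δ₂ : ℝ,
      |WeylW ω (x + δ₁) (y + δ₂) N - WeylW ω x y N| ≤
        C * ((N : ℝ) ^ ((2 : ℝ) + ε) * |δ₁| + (N : ℝ) ^ ((k : ℝ) + 1 + ε) * |δ₂|) := by
  classical
  set Cw : ℝ := ∑ i ∈ Finset.range (ω.natDegree + 1), |((ω.coeff i : ℤ) : ℝ)| with hCwdef
  have hCw0 : 0 ≤ Cw := Finset.sum_nonneg fun i _ => abs_nonneg _
  have hlog2 : 0 ≤ Real.log 2 := Real.log_nonneg one_le_two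
  set D : ℝ := 3 + 2 * Real.log 2 + 2 / ε with hDdef
  have hD : (0 : ℝ) < D := by positivity
  refine ⟨D * (2 * Real.pi) * (1 + Cw), ?_⟩
  intro N hN x y δ₁ δ₂
  have hN1 : (1 : ℝ) ≤ (N : ℝ) := by exact_mod_cast hN
  have hNpos : (0 : ℝ) < (N : ℝ) := lt_of_lt_of_le one_pos hN1
  set M : ℝ := 2 * Real.pi * (|δ₁| * (N : ℝ) ^ 2 + |δ₂| * Cw * (N : ℝ) ^ (k + 1)) with hM
  have hpi : (0 : ℝ) < Real.pi := Real.pi_pos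
  have hM0 : 0 ≤ M := by positivity
  have key : ∀ h ∈ Finset.Icc (-(N : ℤ)) (N : ℤ),
      |(1 / (|(h : ℝ)| + 1)) * ‖(∑ n ∈ Finset.Icc 1 N,
          e ((h : ℝ) * (n : ℝ) / (N : ℝ) + (x + δ₁) * (n : ℝ) + (y + δ₂) * ((ω.eval (n : ℤ) : ℤ) : ℝ)))‖
        - (1 / (|(h : ℝ)| + 1)) * ‖(∑ n ∈ Finset.Icc 1 N,
          e ((h : ℝ) * (n : ℝ) / (N : ℝ) + x * (n : ℝ) + y * ((ω.eval (n : ℤ) : ℤ) : ℝ)))‖|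
        ≤ (1 / (|(h : ℝ)| + 1)) * M := by
    intro h _
    rw [← mul_sub, abs_mul, abs_of_pos (show (0:ℝ) < 1 / (|(h : ℝ)| + 1) by positivity)]
    refine mul_le_mul_of_nonneg_left ?_ (by positivity)
    refine (abs_norm_sub_norm_le _ _).trans ?_
    rw [← Finset.sum_sub_distrib]
    refine (norm_sum_le _ _).trans ?_
    have hstep : ∀ n ∈ Finset.Icc 1 N,
        ‖e ((h : ℝ) * (n : ℝ) / (N : ℝ) + (x + δ₁) * (n : ℝ) + (y + δ₂) * ((ω.eval (n : ℤ) : ℤ) : ℝ))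
          - e ((h : ℝ) * (n : ℝ) / (N : ℝ) + x * (n : ℝ) + y * ((ω.eval (n : ℤ) : ℤ) : ℝ))‖
        ≤ 2 * Real.pi * (|δ₁| * (N : ℝ) + |δ₂| * (Cw * (N : ℝ) ^ k)) := by
      intro n hn
      obtain ⟨hn1, hn2⟩ := Finset.mem_Icc.mp hn
      refine (aux_abs_e_sub_e _ _).trans ?_
      refine mul_le_mul_of_nonneg_left ?_ (by positivity)
      rw [show ((h : ℝ) * (n : ℝ) / (N : ℝ) + (x + δ₁) * (n : ℝ) + (y + δ₂) * ((ω.eval (n : ℤ) : ℤ) : ℝ))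
          - ((h : ℝ) * (n : ℝ) / (N : ℝ) + x * (n : ℝ) + y * ((ω.eval (n : ℤ) : ℤ) : ℝ))
          = δ₁ * (n : ℝ) + δ₂ * ((ω.eval (n : ℤ) : ℤ) : ℝ) from by ring]
      refine (abs_add_le _ _).trans ?_
      rw [abs_mul, abs_mul]
      have hb1 : |(n : ℝ)| ≤ (N : ℝ) := by
        rw [abs_of_nonneg (by positivity)]; exact_mod_cast hn2
      have hb2 : |((ω.eval (n : ℤ) : ℤ) : ℝ)| ≤ Cw * (N : ℝ) ^ k := by
        rw [hCwdef, hω]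
        have := aux_eval_bound ω N n hn1 hn2
        rwa [hω] at this
      gcongr
    refine (Finset.sum_le_sum hstep).trans ?_
    rw [Finset.sum_const, Nat.card_Icc, hM, nsmul_eq_mul]
    have hcard : ((N + 1 - 1 : ℕ) : ℝ) = (N : ℝ) := by push_cast [Nat.add_sub_cancel]; ring
    rw [hcard, pow_succ]
    ring_nf
    nlinarith [sq_nonneg ((N:ℝ))]
  have step1 : |WeylW ω (x + δ₁) (y + δ₂) N - WeylW ω x y N|
      ≤ (∑ h ∈ Finset.Icc (-(N : ℤ)) (N : ℤ), 1 / (|(h : ℝ)| + 1)) * M := by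
    rw [WeylW, WeylW, ← Finset.sum_sub_distrib]
    refine (Finset.abs_sum_le_sum_abs _ _).trans ?_
    rw [Finset.sum_mul]
    exact Finset.sum_le_sum key
  have step3 : ∑ h ∈ Finset.Icc (-(N : ℤ)) (N : ℤ), 1 / (|(h : ℝ)| + 1) ≤ D * (N : ℝ) ^ ε := by
    refine (aux_sum_inv_abs_le N).trans ?_
    have h1 : (harmonic (N + 1) : ℝ) ≤ 1 + Real.log ((N : ℝ) + 1) := by
      have := harmonic_le_one_add_log (N + 1)
      push_cast at this ⊢
      convert this using 3
    have h2 : Real.log ((N : ℝ) + 1) ≤ Real.log 2 + Real.log (N : ℝ) := by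
      rw [← Real.log_mul two_ne_zero (by positivity)]
      exact Real.log_le_log (by positivity) (by linarith)
    have h3 : Real.log (N : ℝ) ≤ (N : ℝ) ^ ε / ε := Real.log_le_rpow_div (by positivity) hε
    have h4 : (1 : ℝ) ≤ (N : ℝ) ^ ε := Real.one_le_rpow hN1 hε.le
    have h5 : 2 * ((N : ℝ) ^ ε / ε) = (2 / ε) * (N : ℝ) ^ ε := by ring
    have h6 : (3 + 2 * Real.log 2) * 1 ≤ (3 + 2 * Real.log 2) * (N : ℝ) ^ ε :=
      mul_le_mul_of_nonneg_left h4 (by positivity)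
    rw [hDdef]
    have h7 : 2 / ε * 1 ≤ 2 / ε * (N : ℝ) ^ ε := mul_le_mul_of_nonneg_left h4 (by positivity)
    nlinarith
  have e1 : (N : ℝ) ^ ((2 : ℝ) + ε) = (N : ℝ) ^ (2 : ℕ) * (N : ℝ) ^ ε := by
    rw [Real.rpow_add hNpos, show ((2 : ℝ)) = ((2 : ℕ) : ℝ) by norm_num, Real.rpow_natCast]
  have e2 : (N : ℝ) ^ ((k : ℝ) + 1 + ε) = (N : ℝ) ^ (k + 1) * (N : ℝ) ^ ε := by
    rw [Real.rpow_add hNpos, show ((k : ℝ) + 1) = ((k + 1 : ℕ) : ℝ) by push_cast; ring,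
      Real.rpow_natCast]
  refine step1.trans ?_
  refine (mul_le_mul_of_nonneg_right step3 hM0).trans ?_
  rw [e1, e2, hM]
  have hX : 0 ≤ (N : ℝ) ^ (2 : ℕ) * (N : ℝ) ^ ε * |δ₁| := by positivity
  have hY : 0 ≤ (N : ℝ) ^ (k + 1) * (N : ℝ) ^ ε * |δ₂| := by positivity
  have hDπ : 0 ≤ D * (2 * Real.pi) := by positivity
  have hkey2 : |δ₁| * (N : ℝ) ^ 2 * (N : ℝ) ^ ε + |δ₂| * Cw * (N : ℝ) ^ (k + 1) * (N : ℝ) ^ ε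
      ≤ (1 + Cw) * ((N : ℝ) ^ (2 : ℕ) * (N : ℝ) ^ ε * |δ₁| + (N : ℝ) ^ (k + 1) * (N : ℝ) ^ ε * |δ₂|) := by
    nlinarith [mul_nonneg hCw0 hX, mul_nonneg hCw0 hY]
  calc D * (N : ℝ) ^ ε * (2 * Real.pi * (|δ₁| * (N : ℝ) ^ 2 + |δ₂| * Cw * (N : ℝ) ^ (k + 1)))
      = D * (2 * Real.pi) * (|δ₁| * (N : ℝ) ^ 2 * (N : ℝ) ^ ε + |δ₂| * Cw * (N : ℝ) ^ (k + 1) * (N : ℝ) ^ ε) := by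
        ring
    _ ≤ D * (2 * Real.pi) * ((1 + Cw) * ((N : ℝ) ^ (2 : ℕ) * (N : ℝ) ^ ε * |δ₁| + (N : ℝ) ^ (k + 1) * (N : ℝ) ^ ε * |δ₂|)) :=
        mul_le_mul_of_nonneg_left hkey2 hDπ
    _ = D * (2 * Real.pi) * (1 + Cw) * ((N : ℝ) ^ (2 : ℕ) * (N : ℝ) ^ ε * |δ₁| + (N : ℝ) ^ (k + 1) * (N : ℝ) ^ ε * |δ₂|) := by
        ring
end

section
/- Let ω ∈ ℤ[X] be a polynomial of degree k ≥ 2, let 0 < α < 1 and ε > 0, and suppose 0 < ζ₁ ≤ N^{α − 2 − ε} and 0 < ζ₂ ≤ N^{α − k − 1 − ε}. Then there exists N₀ (depending on ω, α, ε) such that for all integers N ≥ N₀ the following holds: if W_ω(x, y; N) ≥ N^α for some (x, y) in the rectangle R = [u − ζ₁, u + ζ₁) × [v − ζ₂, v + ζ₂), then W_ω(a, b; N) ≥ N^α / 2 for every (a, b) ∈ R. -/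
open MeasureTheory Finset Polynomial

lemma abs_e (t : ℝ) : ‖e t‖ = 1 := by
  rw [e, show (2 * (Real.pi:ℂ) * Complex.I * (t:ℝ)) = ((2 * Real.pi * t : ℝ) : ℂ) * Complex.I by
    push_cast; ring]
  exact Complex.norm_exp_ofReal_mul_I _

lemma abs_e_sub_one (r : ℝ) : ‖e r - 1‖ ≤ 2 * (2 * Real.pi * |r|) := by
  have habs : ‖2 * (Real.pi:ℂ) * Complex.I * (r:ℝ)‖ = 2 * Real.pi * |r| := by
    simp [abs_of_pos Real.pi_pos]
  rcases le_or_gt (2 * Real.pi * |r|) 1 with h | h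
  · have := Complex.norm_exp_sub_one_le (x := 2 * (Real.pi:ℂ) * Complex.I * (r:ℝ)) (habs ▸ h)
    rw [habs] at this
    exact this
  · have h2 : ‖e r - 1‖ ≤ 2 := by
      calc ‖e r - 1‖ ≤ ‖e r‖ + ‖-1‖ := by
            simpa [sub_eq_add_neg] using norm_add_le (e r) (-1)
        _ = 2 := by rw [abs_e]; simp; norm_num
    nlinarith

lemma e_lip (s t : ℝ) : ‖e t - e s‖ ≤ 4 * Real.pi * |t - s| := by
  have h : e t - e s = e s * (e (t - s) - 1) := by
    rw [mul_sub, mul_one, e, e, e, ← Complex.exp_add]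
    congr 1
    push_cast; ring
  rw [h, norm_mul, abs_e, one_mul]
  have := abs_e_sub_one (t - s)
  linarith

lemma eval_bound (ω : Polynomial ℤ) (N : ℕ) (hN : 1 ≤ N) (n : ℕ) (hn : n ∈ Finset.Icc 1 N) :
    |((ω.eval (n:ℤ) : ℤ) : ℝ)| ≤
      (∑ i ∈ Finset.range (ω.natDegree + 1), |((ω.coeff i : ℤ):ℝ)|) * (N:ℝ) ^ ω.natDegree := by
  rw [Finset.mem_Icc] at hn
  have h := Polynomial.eval_eq_sum_range (p := ω) (n:ℤ)
  rw [h]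
  push_cast
  calc |∑ i ∈ Finset.range (ω.natDegree + 1), ((ω.coeff i : ℝ) * (n:ℝ) ^ i)|
      ≤ ∑ i ∈ Finset.range (ω.natDegree + 1), |(ω.coeff i : ℝ) * (n:ℝ) ^ i| :=
        Finset.abs_sum_le_sum_abs _ _
    _ ≤ ∑ i ∈ Finset.range (ω.natDegree + 1), |(ω.coeff i : ℝ)| * (N:ℝ) ^ ω.natDegree := by
        refine Finset.sum_le_sum fun i hi => ?_
        rw [Finset.mem_range] at hi
        rw [abs_mul]
        refine mul_le_mul_of_nonneg_left ?_ (abs_nonneg _)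
        rw [abs_pow, Nat.abs_cast]
        calc (n:ℝ) ^ i ≤ (N:ℝ) ^ i := by
              exact pow_le_pow_left₀ (by positivity) (by exact_mod_cast hn.2) i
          _ ≤ (N:ℝ) ^ ω.natDegree := by
              exact pow_le_pow_right₀ (by exact_mod_cast hN) (by omega)
    _ = _ := by rw [← Finset.sum_mul]

lemma weight_sum_le (N : ℕ) :
    ∑ h ∈ Finset.Icc (-(N : ℤ)) (N : ℤ), (1 / (|(h : ℝ)| + 1)) ≤ 2 + 2 * Real.log (N + 1) := by
  induction N with
  | zero => simp
  | succ n ih =>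
    have hset : Finset.Icc (-((n+1 : ℕ) : ℤ)) ((n+1 : ℕ) : ℤ) =
        insert (-((n:ℤ)+1)) (insert ((n:ℤ)+1) (Finset.Icc (-(n:ℤ)) (n:ℤ))) := by
      ext h
      simp only [Finset.mem_Icc, Finset.mem_insert]
      push_cast
      omega
    have h1 : (-((n:ℤ)+1)) ∉ insert ((n:ℤ)+1) (Finset.Icc (-(n:ℤ)) (n:ℤ)) := by
      simp only [Finset.mem_insert, Finset.mem_Icc]
      omega
    have h2 : ((n:ℤ)+1) ∉ Finset.Icc (-(n:ℤ)) (n:ℤ) := by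
      simp only [Finset.mem_Icc]; omega
    rw [hset, Finset.sum_insert h1, Finset.sum_insert h2]
    have hv1 : |((-((n:ℤ)+1) : ℤ) : ℝ)| = (n:ℝ) + 1 := by
      push_cast; rw [abs_neg, abs_of_nonneg (by positivity)]
    have hv2 : |((((n:ℤ)+1) : ℤ) : ℝ)| = (n:ℝ) + 1 := by
      push_cast; rw [abs_of_nonneg (by positivity)]
    rw [hv1, hv2]
    have hlog : 1 / ((n:ℝ) + 1 + 1) ≤ Real.log ((n:ℝ) + 1 + 1) - Real.log ((n:ℝ) + 1) := by
      have hp1 : (0:ℝ) < (n:ℝ) + 1 := by positivity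
      have hp2 : (0:ℝ) < (n:ℝ) + 1 + 1 := by positivity
      have := Real.log_le_sub_one_of_pos (x := ((n:ℝ)+1)/((n:ℝ)+1+1)) (by positivity)
      rw [Real.log_div (ne_of_gt hp1) (ne_of_gt hp2)] at this
      have heq : ((n:ℝ)+1)/((n:ℝ)+1+1) - 1 = -(1/((n:ℝ)+1+1)) := by field_simp; ring
      rw [heq] at this
      linarith
    have hcast : ((n+1:ℕ):ℝ) + 1 = (n:ℝ) + 1 + 1 := by push_cast; ring
    rw [hcast]
    linarith

lemma inner_diff (ω : Polynomial ℤ) (x y a b : ℝ) (N : ℕ) (h : ℤ) (C : ℝ)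
    (hC : ∀ n ∈ Finset.Icc 1 N, |((ω.eval (n:ℤ) : ℤ) : ℝ)| ≤ C) :
    ‖∑ n ∈ Finset.Icc 1 N,
        e ((h:ℝ)*(n:ℝ)/(N:ℝ) + x*(n:ℝ) + y*((ω.eval (n:ℤ):ℤ):ℝ))‖
    ≤ ‖∑ n ∈ Finset.Icc 1 N,
        e ((h:ℝ)*(n:ℝ)/(N:ℝ) + a*(n:ℝ) + b*((ω.eval (n:ℤ):ℤ):ℝ))‖
      + (N:ℝ) * (4*Real.pi*(|x-a| *(N:ℝ) + |y-b| *C)) := by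
  set S1 := ∑ n ∈ Finset.Icc 1 N,
      e ((h:ℝ)*(n:ℝ)/(N:ℝ) + x*(n:ℝ) + y*((ω.eval (n:ℤ):ℤ):ℝ)) with hS1
  set S2 := ∑ n ∈ Finset.Icc 1 N,
      e ((h:ℝ)*(n:ℝ)/(N:ℝ) + a*(n:ℝ) + b*((ω.eval (n:ℤ):ℤ):ℝ)) with hS2
  have key : ‖S1 - S2‖ ≤ (N:ℝ) * (4*Real.pi*(|x-a| *(N:ℝ) + |y-b| *C)) := by
    rw [hS1, hS2, ← Finset.sum_sub_distrib]
    refine le_trans (norm_sum_le _ _) ?_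
    have hterm : ∀ n ∈ Finset.Icc 1 N,
        ‖e ((h:ℝ)*(n:ℝ)/(N:ℝ) + x*(n:ℝ) + y*((ω.eval (n:ℤ):ℤ):ℝ))
          - e ((h:ℝ)*(n:ℝ)/(N:ℝ) + a*(n:ℝ) + b*((ω.eval (n:ℤ):ℤ):ℝ))‖
        ≤ 4*Real.pi*(|x-a| *(N:ℝ) + |y-b| *C) := by
      intro n hn
      rw [Finset.mem_Icc] at hn
      refine le_trans (e_lip _ _) ?_
      have heq : ((h:ℝ)*(n:ℝ)/(N:ℝ) + x*(n:ℝ) + y*((ω.eval (n:ℤ):ℤ):ℝ))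
          - ((h:ℝ)*(n:ℝ)/(N:ℝ) + a*(n:ℝ) + b*((ω.eval (n:ℤ):ℤ):ℝ))
          = (x-a)*(n:ℝ) + (y-b)*((ω.eval (n:ℤ):ℤ):ℝ) := by ring
      rw [heq]
      have h1 : |(x-a)*(n:ℝ) + (y-b)*((ω.eval (n:ℤ):ℤ):ℝ)|
          ≤ |x-a| *(N:ℝ) + |y-b| *C := by
        refine le_trans (abs_add_le _ _) ?_
        rw [abs_mul, abs_mul]
        have hn' : |(n:ℝ)| ≤ (N:ℝ) := by
          rw [Nat.abs_cast]; exact_mod_cast hn.2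
        have hw := hC n (Finset.mem_Icc.mpr hn)
        have := mul_le_mul_of_nonneg_left hn' (abs_nonneg (x-a))
        have := mul_le_mul_of_nonneg_left hw (abs_nonneg (y-b))
        linarith
      nlinarith [Real.pi_pos, abs_nonneg ((x-a)*(n:ℝ) + (y-b)*((ω.eval (n:ℤ):ℤ):ℝ))]
    refine le_trans (Finset.sum_le_sum hterm) ?_
    rw [Finset.sum_const, nsmul_eq_mul, Nat.card_Icc]
    simp
  have htri : ‖S1‖ ≤ ‖S2‖ + ‖S1 - S2‖ := by
    calc ‖S1‖ = ‖S2 + (S1 - S2)‖ := by ring_nf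
      _ ≤ ‖S2‖ + ‖S1 - S2‖ := norm_add_le _ _
  linarith

set_option maxHeartbeats 1000000 in
theorem large_values_propagate_on_rectangles
    (k : ℕ) (hk : 2 ≤ k) (ω : Polynomial ℤ) (hω : ω.natDegree = k)
    (α : ℝ) (hα0 : 0 < α) (hα1 : α < 1) (ε : ℝ) (hε : 0 < ε) :
    ∃ N₀ : ℕ, ∀ N : ℕ, N₀ ≤ N → ∀ ζ₁ ζ₂ u v : ℝ,
      0 < ζ₁ → ζ₁ ≤ (N : ℝ) ^ (α - 2 - ε) →
      0 < ζ₂ → ζ₂ ≤ (N : ℝ) ^ (α - (k : ℝ) - 1 - ε) →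
      (∃ x ∈ Set.Ico (u - ζ₁) (u + ζ₁), ∃ y ∈ Set.Ico (v - ζ₂) (v + ζ₂),
        (N : ℝ) ^ α ≤ WeylW ω x y N) →
      ∀ a ∈ Set.Ico (u - ζ₁) (u + ζ₁), ∀ b ∈ Set.Ico (v - ζ₂) (v + ζ₂),
        (N : ℝ) ^ α / 2 ≤ WeylW ω a b N := by
  set C₀ : ℝ := ∑ i ∈ Finset.range (ω.natDegree + 1), |((ω.coeff i : ℤ):ℝ)| with hC₀def
  have hC₀ : 0 ≤ C₀ := Finset.sum_nonneg fun _ _ => abs_nonneg _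
  set K : ℝ := 4 * Real.pi * (2 + 2 * C₀) with hKdef
  have hK : 0 < K := by
    have := Real.pi_pos
    rw [hKdef]; nlinarith
  set A : ℝ := max (4*K) (8*K*(2:ℝ)^(ε/2)/ε) + 1 with hAdef
  have hA4K : 4*K ≤ A := le_trans (le_max_left _ _) (by rw [hAdef]; linarith)
  have hA8K : 8*K*(2:ℝ)^(ε/2)/ε ≤ A := le_trans (le_max_right _ _) (by rw [hAdef]; linarith)
  have hA1 : 1 ≤ A := by
    have h0 : (0:ℝ) ≤ max (4*K) (8*K*(2:ℝ)^(ε/2)/ε) :=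
      le_max_of_le_left (by positivity)
    rw [hAdef]; linarith
  have htend : Filter.Tendsto (fun N : ℕ => (N:ℝ) ^ (ε/2)) Filter.atTop Filter.atTop :=
    (tendsto_rpow_atTop (by positivity)).comp tendsto_natCast_atTop_atTop
  obtain ⟨N₁, hN₁⟩ := Filter.eventually_atTop.mp (htend.eventually_ge_atTop (2*A))
  refine ⟨max N₁ 1, fun N hN ζ₁ ζ₂ u v hζ₁ hζ₁N hζ₂ hζ₂N hex a ha b hb => ?_⟩
  have hN1 : 1 ≤ N := le_trans (le_max_right _ _) hN
  have hNR : (0:ℝ) < (N:ℝ) := by exact_mod_cast Nat.lt_of_lt_of_le Nat.zero_lt_one hN1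
  have hNR1 : (1:ℝ) ≤ (N:ℝ) := by exact_mod_cast hN1
  have hpow : 2*A ≤ (N:ℝ)^(ε/2) := hN₁ N (le_trans (le_max_left _ _) hN)
  have hx1 : (1:ℝ) ≤ (N:ℝ)^(ε/2) := le_trans (by linarith) hpow
  -- the epsilon-power bound
  have hNε : 2 * (2 + 2 * Real.log ((N:ℝ)+1)) * K ≤ (N:ℝ) ^ ε := by
    have hlog : Real.log ((N:ℝ)+1) ≤ 2 * ((N:ℝ)+1) ^ (ε/2) / ε := by
      calc Real.log ((N:ℝ)+1) ≤ ((N:ℝ)+1)^(ε/2) / (ε/2) :=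
            Real.log_le_rpow_div (by positivity) (half_pos hε)
        _ = 2 * ((N:ℝ)+1)^(ε/2) / ε := by field_simp
    have h2N : ((N:ℝ)+1) ^ (ε/2) ≤ (2:ℝ)^(ε/2) * (N:ℝ)^(ε/2) := by
      rw [← Real.mul_rpow (by norm_num) (le_of_lt hNR)]
      exact Real.rpow_le_rpow (by positivity) (by linarith) (by positivity)
    have e2 : 4*K*Real.log ((N:ℝ)+1) ≤ A * (N:ℝ)^(ε/2) := by
      calc 4*K*Real.log ((N:ℝ)+1) ≤ 4*K*(2 * ((N:ℝ)+1)^(ε/2) / ε) :=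
            mul_le_mul_of_nonneg_left hlog (by positivity)
        _ ≤ 4*K*(2 * ((2:ℝ)^(ε/2) * (N:ℝ)^(ε/2)) / ε) := by gcongr
        _ = (8*K*(2:ℝ)^(ε/2)/ε) * (N:ℝ)^(ε/2) := by ring
        _ ≤ A * (N:ℝ)^(ε/2) := mul_le_mul_of_nonneg_right hA8K (by positivity)
    have e1 : 4*K ≤ A * (N:ℝ)^(ε/2) :=
      hA4K.trans ((le_mul_iff_one_le_right (lt_of_lt_of_le one_pos hA1)).mpr hx1)
    have efin : (N:ℝ)^(ε/2) * (N:ℝ)^(ε/2) = (N:ℝ)^ε := by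
      rw [← Real.rpow_add hNR]; ring_nf
    have : 2*A*(N:ℝ)^(ε/2) ≤ (N:ℝ)^(ε/2) * (N:ℝ)^(ε/2) :=
      mul_le_mul_of_nonneg_right hpow (by positivity)
    nlinarith [Real.log_nonneg (by linarith : (1:ℝ) ≤ (N:ℝ)+1)]
  obtain ⟨x, hx, y, hy, hW⟩ := hex
  set Cb : ℝ := C₀ * (N:ℝ)^ω.natDegree with hCbdef
  have hCb0 : 0 ≤ Cb := mul_nonneg hC₀ (by positivity)
  have hCbn : ∀ n ∈ Finset.Icc 1 N, |((ω.eval (n:ℤ):ℤ):ℝ)| ≤ Cb :=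
    fun n hn => eval_bound ω N hN1 n hn
  set B : ℝ := (N:ℝ) * (4*Real.pi*(|x-a| * (N:ℝ) + |y-b| * Cb)) with hBdef
  have hB0 : 0 ≤ B := by
    have := Real.pi_pos
    have h1 : 0 ≤ |x-a| * (N:ℝ) + |y-b| * Cb := by positivity
    rw [hBdef]; positivity
  set H : ℝ := ∑ h ∈ Finset.Icc (-(N : ℤ)) (N : ℤ), (1 / (|(h : ℝ)| + 1)) with hHdef
  have hterm : ∀ h' ∈ Finset.Icc (-(N : ℤ)) (N : ℤ),
      (1 / (|(h' : ℝ)| + 1)) *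
        ‖∑ n ∈ Finset.Icc 1 N,
          e ((h' : ℝ) * (n : ℝ) / (N : ℝ) + x * (n : ℝ) + y * ((ω.eval (n : ℤ) : ℤ) : ℝ))‖
      ≤ (1 / (|(h' : ℝ)| + 1)) *
        ‖∑ n ∈ Finset.Icc 1 N,
          e ((h' : ℝ) * (n : ℝ) / (N : ℝ) + a * (n : ℝ) + b * ((ω.eval (n : ℤ) : ℤ) : ℝ))‖
        + (1 / (|(h' : ℝ)| + 1)) * B := by
    intro h' _
    have hid := inner_diff ω x y a b N h' Cb hCbn
    rw [← hBdef] at hid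
    have hw : (0:ℝ) ≤ 1 / (|(h' : ℝ)| + 1) := by positivity
    calc (1 / (|(h' : ℝ)| + 1)) *
        ‖∑ n ∈ Finset.Icc 1 N,
          e ((h' : ℝ) * (n : ℝ) / (N : ℝ) + x * (n : ℝ) + y * ((ω.eval (n : ℤ) : ℤ) : ℝ))‖
        ≤ (1 / (|(h' : ℝ)| + 1)) *
          (‖∑ n ∈ Finset.Icc 1 N,
            e ((h' : ℝ) * (n : ℝ) / (N : ℝ) + a * (n : ℝ) + b * ((ω.eval (n : ℤ) : ℤ) : ℝ))‖ + B) :=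
          mul_le_mul_of_nonneg_left hid hw
      _ = _ := mul_add _ _ _
  have hWx : WeylW ω x y N ≤ WeylW ω a b N + H * B := by
    simp only [WeylW]
    refine le_trans (Finset.sum_le_sum hterm) ?_
    rw [Finset.sum_add_distrib, ← Finset.sum_mul, hHdef]
  -- bound B
  have hxa : |x - a| ≤ 2 * (N:ℝ)^(α-2-ε) := by
    obtain ⟨hx1', hx2'⟩ := hx
    obtain ⟨ha1', ha2'⟩ := ha
    have : |x - a| ≤ 2*ζ₁ := abs_sub_le_iff.mpr ⟨by linarith, by linarith⟩
    linarith
  have hyb : |y - b| ≤ 2 * (N:ℝ)^(α-(k:ℝ)-1-ε) := by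
    obtain ⟨hy1', hy2'⟩ := hy
    obtain ⟨hb1', hb2'⟩ := hb
    have : |y - b| ≤ 2*ζ₂ := abs_sub_le_iff.mpr ⟨by linarith, by linarith⟩
    linarith
  have e1 : (N:ℝ)^(α-2-ε) * ((N:ℝ)*(N:ℝ)) = (N:ℝ)^(α-ε) := by
    rw [show (N:ℝ)*(N:ℝ) = (N:ℝ)^((2:ℕ):ℝ) by rw [Real.rpow_natCast]; ring,
      ← Real.rpow_add hNR]
    congr 1
    push_cast
    ring
  have e2 : (N:ℝ)^(α-(k:ℝ)-1-ε) * ((N:ℝ)^ω.natDegree * (N:ℝ)) = (N:ℝ)^(α-ε) := by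
    rw [hω, show (N:ℝ)^(k:ℕ) * (N:ℝ) = (N:ℝ)^(((k+1:ℕ)):ℝ) by
        rw [Real.rpow_natCast, pow_succ],
      ← Real.rpow_add hNR]
    congr 1
    push_cast
    ring
  have hBb : B ≤ K * (N:ℝ)^(α-ε) := by
    have hpi := Real.pi_pos
    calc B = 4*Real.pi*(|x-a| * ((N:ℝ)*(N:ℝ))
          + |y-b| * (C₀ * ((N:ℝ)^ω.natDegree * (N:ℝ)))) := by
          rw [hBdef, hCbdef]; ring
      _ ≤ 4*Real.pi*((2 * (N:ℝ)^(α-2-ε)) * ((N:ℝ)*(N:ℝ))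
          + (2 * (N:ℝ)^(α-(k:ℝ)-1-ε)) * (C₀ * ((N:ℝ)^ω.natDegree * (N:ℝ)))) := by
          gcongr
      _ = 4*Real.pi*(2*((N:ℝ)^(α-2-ε) * ((N:ℝ)*(N:ℝ)))
          + 2*C₀*((N:ℝ)^(α-(k:ℝ)-1-ε) * ((N:ℝ)^ω.natDegree * (N:ℝ)))) := by ring
      _ = K * (N:ℝ)^(α-ε) := by rw [e1, e2, hKdef]; ring
  have hH : H ≤ 2 + 2 * Real.log ((N:ℝ)+1) := by
    rw [hHdef]; exact weight_sum_le N
  have hHB : H * B ≤ (2 + 2 * Real.log ((N:ℝ)+1)) * (K * (N:ℝ)^(α-ε)) := by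
    refine mul_le_mul hH hBb hB0 ?_
    have := Real.log_nonneg (by linarith : (1:ℝ) ≤ (N:ℝ)+1)
    linarith
  have hεα : (N:ℝ)^ε * (N:ℝ)^(α-ε) = (N:ℝ)^α := by
    rw [← Real.rpow_add hNR]; ring_nf
  have hfin : (2 + 2 * Real.log ((N:ℝ)+1)) * (K * (N:ℝ)^(α-ε)) ≤ (N:ℝ)^α / 2 := by
    have h1 : (2 + 2 * Real.log ((N:ℝ)+1)) * K ≤ (N:ℝ)^ε / 2 := by linarith
    calc (2 + 2 * Real.log ((N:ℝ)+1)) * (K * (N:ℝ)^(α-ε))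
        = ((2 + 2 * Real.log ((N:ℝ)+1)) * K) * (N:ℝ)^(α-ε) := by ring
      _ ≤ ((N:ℝ)^ε / 2) * (N:ℝ)^(α-ε) := mul_le_mul_of_nonneg_right h1 (by positivity)
      _ = (N:ℝ)^α / 2 := by rw [div_mul_eq_mul_div, hεα]
  linarith
end
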